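/- Fix natural numbers a, b, n₁, n with a ≤ n₁ ≤ n and a + b ≤ n, set β = 0, and let C = {0, 1, …, a} × {0, 1, …, b} be the set of all contingency-table configurations (a', b') reachable by refinements of a rule with counts (a, b). Then the maximum of τ over C is attained on the line b' = 0: max_{(a',b') ∈ C} τ(a', b') = max_{a' ∈ {0,…,a}} τ(a', 0), where τ(a', 0) = (a'+1)/(a'+2) − (n₁−a'+1)/(n−a'+2). -/

import Mathlib

/-- With `β = 0`, the maximum of the stratum score
`τ(a', b') = (a'+1)/(a'+b'+2) − (n₁−a'+1)/(n−a'−b'+2)` over all reachable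
contingency-table configurations `C = {0,…,a} × {0,…,b}` is attained on the
line `b' = 0`. -/
theorem tau_plugin_tight_optimistic (a b n₁ n : ℕ) (h1 : a ≤ n₁) (h2 : n₁ ≤ n)
    (h3 : a + b ≤ n) :
    (Finset.range (a + 1) ×ˢ Finset.range (b + 1)).sup'
        (Finset.nonempty_range_add_one.product Finset.nonempty_range_add_one)
        (fun ab : ℕ × ℕ =>
          ((ab.1 : ℝ) + 1) / ((ab.1 : ℝ) + (ab.2 : ℝ) + 2)
            - ((n₁ : ℝ) - (ab.1 : ℝ) + 1) / ((n : ℝ) - (ab.1 : ℝ) - (ab.2 : ℝ) + 2))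
      = (Finset.range (a + 1)).sup' Finset.nonempty_range_add_one
          (fun a' : ℕ =>
            ((a' : ℝ) + 1) / ((a' : ℝ) + 2)
              - ((n₁ : ℝ) - (a' : ℝ) + 1) / ((n : ℝ) - (a' : ℝ) + 2)) := by
  apply le_antisymm
  · apply Finset.sup'_le
    intro ab hab
    rw [Finset.mem_product, Finset.mem_range, Finset.mem_range] at hab
    obtain ⟨ha, hb⟩ := hab
    refine le_trans ?_ (Finset.le_sup' _ (Finset.mem_range.mpr ha))
    have ha1 : (ab.1 : ℝ) ≤ a := by exact_mod_cast Nat.lt_succ_iff.mp ha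
    have hn1 : (a : ℝ) ≤ n₁ := by exact_mod_cast h1
    have hab2 : (ab.1 : ℝ) + (ab.2 : ℝ) ≤ n := by
      have : ab.1 + ab.2 ≤ n :=
        le_trans (Nat.add_le_add (Nat.lt_succ_iff.mp ha) (Nat.lt_succ_iff.mp hb)) h3
      exact_mod_cast this
    have hb0 : (0 : ℝ) ≤ (ab.2 : ℝ) := by positivity
    have hd1 : (0 : ℝ) < (ab.1 : ℝ) + 2 := by positivity
    have hd2 : (0 : ℝ) < (n : ℝ) - (ab.1 : ℝ) - (ab.2 : ℝ) + 2 := by linarith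
    have hnum : (0 : ℝ) ≤ (n₁ : ℝ) - (ab.1 : ℝ) + 1 := by linarith
    have t1 : ((ab.1 : ℝ) + 1) / ((ab.1 : ℝ) + (ab.2 : ℝ) + 2)
        ≤ ((ab.1 : ℝ) + 1) / ((ab.1 : ℝ) + 2) := by
      apply div_le_div_of_nonneg_left (by positivity) hd1
      linarith
    have t2 : ((n₁ : ℝ) - (ab.1 : ℝ) + 1) / ((n : ℝ) - (ab.1 : ℝ) + 2)
        ≤ ((n₁ : ℝ) - (ab.1 : ℝ) + 1) / ((n : ℝ) - (ab.1 : ℝ) - (ab.2 : ℝ) + 2) := by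
      apply div_le_div_of_nonneg_left hnum hd2
      linarith
    linarith
  · apply Finset.sup'_le
    intro a' ha'
    have hmem : (a', 0) ∈ Finset.range (a + 1) ×ˢ Finset.range (b + 1) := by
      rw [Finset.mem_product]
      exact ⟨ha', Finset.mem_range.mpr (Nat.succ_pos b)⟩
    refine le_trans (le_of_eq ?_) (Finset.le_sup' _ hmem)
    norm_num
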